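/- Let a > c > 0 be reals. For each pair of integers n > s ≥ 1 let z_{n,s} be a probability distribution on {1,…,n-s} that first-order dominates the uniform partition distribution f_{n,s}, i.e., Σ_{j=1}^{m} z_{n,s}(j) ≤ Σ_{j=1}^{m} f_{n,s}(j) for all m ∈ {1,…,n-s}. Define v_z^n(s) = (a-c)²·h²/(1+h)² with h = Σ_{j=1}^{n-s} z_{n,s}(j)/(1+j) for 1 ≤ s ≤ n-1, and v_z^n(n) = (a-c)²/4. Then (i) for every n, every core allocation of (Fin n, v^n) is a core allocation of (Fin n, v_z^n); and (ii) there exists an integer N₀ such that for every n ≥ N₀ the core of (Fin n, v_z^n) is nonempty. -/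

import Mathlib

/-- Stirling number of the second kind (as a real number):
`K m j = (1/j!) · Σ_{i=0}^{j} (-1)^i · C(j,i) · (j-i)^m`. -/
noncomputable def K (m j : ℕ) : ℝ :=
  (1 / (Nat.factorial j : ℝ)) *
    ∑ i ∈ Finset.range (j + 1), (-1 : ℝ) ^ i * (Nat.choose j i : ℝ) * ((j - i : ℕ) : ℝ) ^ m

/-- Bell number `B m = Σ_{j=1}^{m} K m j`. -/
noncomputable def B (m : ℕ) : ℝ := ∑ j ∈ Finset.Icc 1 m, K m j

/-- Uniform partition distribution: `f n s j = K (n-s) j / B (n-s)`. -/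
noncomputable def f (n s j : ℕ) : ℝ := K (n - s) j / B (n - s)

/-- `F n s = Σ_{j=1}^{n-s} j · f n s j / (j+1)`. -/
noncomputable def F (n s : ℕ) : ℝ :=
  ∑ j ∈ Finset.Icc 1 (n - s), (j : ℝ) * f n s j / ((j : ℝ) + 1)

/-- Value of a coalition of size `s` in the `n`-firm uniform-distribution game:
`v^n(n) = (a-c)²/4`, `v^n(0) = 0`, and for `1 ≤ s ≤ n-1`,
`v^n(s) = (a-c)² · (1-F)/(2-F)² · Σ_{j=1}^{n-s} f n s j / (j+1)`. -/
noncomputable def v (a c : ℝ) (n s : ℕ) : ℝ :=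
  if s = n then (a - c) ^ 2 / 4
  else if s = 0 then 0
  else (a - c) ^ 2 * ((1 - F n s) / (2 - F n s) ^ 2) *
    ∑ j ∈ Finset.Icc 1 (n - s), f n s j / ((j : ℝ) + 1)

open Finset

noncomputable def Sr (m j : ℕ) : ℝ :=
  ∑ i ∈ Finset.range (j + 1), (-1 : ℝ) ^ i * (Nat.choose j i : ℝ) * ((j - i : ℕ) : ℝ) ^ m

lemma choose_mul_sub (j i : ℕ) :
    Nat.choose (j+1) i * (j + 1 - i) = (j+1) * Nat.choose j i := by
  rw [← Nat.choose_succ_right_eq, Nat.add_one_mul_choose_eq]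

lemma Sr_rec (m j : ℕ) : Sr (m+1) (j+1) = (j+1) * (Sr m (j+1) + Sr m j) := by
  set A : ℕ → ℝ := fun i => (-1:ℝ)^i * (Nat.choose j i : ℝ) * ((j+1 - i : ℕ) : ℝ) ^ m with hA
  have key : ∀ i, (-1:ℝ)^i * (Nat.choose (j+1) i : ℝ) * ((j+1 - i : ℕ) : ℝ) ^ (m+1)
      = (j+1) * A i := by
    intro i
    have h : ((Nat.choose (j+1) i : ℕ) : ℝ) * ((j + 1 - i : ℕ) : ℝ) = ((j+1 : ℕ) : ℝ) * ((Nat.choose j i : ℕ) : ℝ) := by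
      rw [← Nat.cast_mul, ← Nat.cast_mul, choose_mul_sub]
    calc (-1:ℝ)^i * (Nat.choose (j+1) i : ℝ) * ((j+1 - i : ℕ) : ℝ) ^ (m+1)
        = (-1:ℝ)^i * ((Nat.choose (j+1) i : ℝ) * ((j+1 - i : ℕ) : ℝ)) * ((j+1 - i : ℕ) : ℝ) ^ m := by
          ring
      _ = (-1:ℝ)^i * (((j+1:ℕ):ℝ) * (Nat.choose j i : ℝ)) * ((j+1 - i : ℕ) : ℝ) ^ m := by rw [h]
      _ = (j+1) * A i := by push_cast; simp only [hA]; ring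
  have step1 : Sr (m+1) (j+1) = (j+1) * ∑ i ∈ Finset.range (j+2), A i := by
    rw [Sr, Finset.mul_sum]
    exact Finset.sum_congr rfl fun i _ => key i
  have step2 : ∑ i ∈ Finset.range (j+2), A i = ∑ i ∈ Finset.range (j+1), A i := by
    rw [Finset.sum_range_succ]
    simp [hA]
  have expand : ∀ i ∈ Finset.range (j+1),
      (-1:ℝ)^(i+1) * (Nat.choose (j+1) (i+1) : ℝ) * ((j+1 - (i+1) : ℕ) : ℝ) ^ m
      = A (i+1) - (-1:ℝ)^i * (Nat.choose j i : ℝ) * ((j - i : ℕ) : ℝ) ^ m := by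
    intro i _
    have hp : ((Nat.choose (j+1) (i+1) : ℕ) : ℝ) = (Nat.choose j i : ℝ) + (Nat.choose j (i+1) : ℝ) := by
      rw [Nat.choose_succ_succ]; push_cast; ring
    have hs : (j+1 - (i+1) : ℕ) = (j - i : ℕ) := by omega
    rw [hs, hp, hA]
    simp only []
    rw [hs]
    ring
  have step3 : Sr m (j+1) = (∑ i ∈ Finset.range (j+1), A i) - Sr m j := by
    rw [Sr, Finset.sum_range_succ']
    rw [Finset.sum_congr rfl expand, Finset.sum_sub_distrib]
    have h0 : (-1:ℝ)^0 * (Nat.choose (j+1) 0 : ℝ) * ((j+1 - 0 : ℕ) : ℝ) ^ m = A 0 := by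
      simp [hA]
    have sum_id : (∑ i ∈ Finset.range (j+1), A (i+1)) + A 0 = ∑ i ∈ Finset.range (j+2), A i :=
      (Finset.sum_range_succ' A (j+1)).symm
    rw [h0, Sr]
    linarith [sum_id, step2]
  rw [step1, step2, step3]
  ring

lemma Sr_zero_right (m : ℕ) : Sr m 0 = (0:ℝ) ^ m := by
  simp [Sr]

lemma Sr_zero_left (j : ℕ) : Sr 0 j = if j = 0 then 1 else 0 := by
  have h := Int.alternating_sum_range_choose (n := j)
  have h2 : ((∑ i ∈ range (j + 1), (-1:ℤ) ^ i * (j.choose i : ℤ) : ℤ) : ℝ)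
      = ((if j = 0 then (1:ℤ) else 0 : ℤ) : ℝ) := congrArg _ h
  push_cast at h2
  rw [Sr]
  simpa using h2

lemma Sr_nonneg (m j : ℕ) : 0 ≤ Sr m j := by
  induction m generalizing j with
  | zero => rw [Sr_zero_left]; split <;> norm_num
  | succ m ih =>
    cases j with
    | zero => rw [Sr_zero_right]; positivity
    | succ j =>
      rw [Sr_rec]
      have := ih j
      have := ih (j+1)
      positivity

lemma Sr_transform (m : ℕ) : ∀ j : ℕ,
    ∑ k ∈ Finset.range (j+1), (Nat.choose j k : ℝ) * Sr m k = ((j:ℕ):ℝ) ^ m := by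
  induction m with
  | zero =>
    intro j
    rw [Finset.sum_eq_single 0]
    · simp [Sr_zero_left]
    · intro k _ hk; rw [Sr_zero_left, if_neg hk, mul_zero]
    · intro h; simp at h
  | succ m ih =>
    intro j
    cases j with
    | zero => simp [Sr_zero_right]
    | succ j =>
      rw [Finset.sum_range_succ']
      have h0 : (Nat.choose (j+1) 0 : ℝ) * Sr (m+1) 0 = 0 := by
        rw [Sr_zero_right]; simp
      have hterm : ∀ k, (Nat.choose (j+1) (k+1) : ℝ) * Sr (m+1) (k+1)
          = ((j:ℝ)+1) * ((Nat.choose j k : ℝ) * (Sr m (k+1) + Sr m k)) := by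
        intro k
        rw [Sr_rec]
        have hn : ((Nat.choose (j+1) (k+1) * (k+1) : ℕ) : ℝ) = (((j+1) * Nat.choose j k : ℕ) : ℝ) := by
          rw [← Nat.add_one_mul_choose_eq]
        push_cast at hn
        calc (Nat.choose (j+1) (k+1) : ℝ) * (((k:ℝ)+1) * (Sr m (k+1) + Sr m k))
            = ((Nat.choose (j+1) (k+1) : ℝ) * ((k:ℝ)+1)) * (Sr m (k+1) + Sr m k) := by ring
          _ = (((j:ℝ)+1) * (Nat.choose j k : ℝ)) * (Sr m (k+1) + Sr m k) := by rw [hn]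
          _ = ((j:ℝ)+1) * ((Nat.choose j k : ℝ) * (Sr m (k+1) + Sr m k)) := by ring
      rw [Finset.sum_congr rfl (fun k _ => hterm k), h0, add_zero, ← Finset.mul_sum]
      have split : ∑ k ∈ Finset.range (j+1), (Nat.choose j k : ℝ) * (Sr m (k+1) + Sr m k)
          = (∑ k ∈ Finset.range (j+1), (Nat.choose j k : ℝ) * Sr m (k+1)) + ((j:ℕ):ℝ)^m := by
        rw [← ih j, ← Finset.sum_add_distrib]
        exact Finset.sum_congr rfl (fun k _ => by ring)
      have shift : ∑ k ∈ Finset.range (j+1), (Nat.choose j k : ℝ) * Sr m (k+1)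
          = (((j+1:ℕ):ℝ))^m - ((j:ℕ):ℝ)^m := by
        have e1 : ∑ k ∈ Finset.range (j+2), ((Nat.choose (j+1) k : ℝ) - (Nat.choose j k : ℝ)) * Sr m k
            = (((j+1:ℕ):ℝ))^m - ((j:ℕ):ℝ)^m := by
          calc ∑ k ∈ Finset.range (j+2), ((Nat.choose (j+1) k : ℝ) - (Nat.choose j k : ℝ)) * Sr m k
              = ∑ k ∈ Finset.range (j+2), ((Nat.choose (j+1) k : ℝ) * Sr m k - (Nat.choose j k : ℝ) * Sr m k) :=
                Finset.sum_congr rfl (fun k _ => by ring)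
            _ = (∑ k ∈ Finset.range (j+2), (Nat.choose (j+1) k : ℝ) * Sr m k)
                - ∑ k ∈ Finset.range (j+2), (Nat.choose j k : ℝ) * Sr m k := Finset.sum_sub_distrib _ _
            _ = (((j+1:ℕ):ℝ))^m - ((j:ℕ):ℝ)^m := by
                rw [ih (j+1)]
                have : ∑ k ∈ Finset.range (j+2), (Nat.choose j k : ℝ) * Sr m k
                    = ∑ k ∈ Finset.range (j+1), (Nat.choose j k : ℝ) * Sr m k := by
                  rw [Finset.sum_range_succ, Nat.choose_succ_self]
                  simp
                rw [this, ih j]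
        have e2 : ∑ k ∈ Finset.range (j+2), ((Nat.choose (j+1) k : ℝ) - (Nat.choose j k : ℝ)) * Sr m k
            = ∑ k ∈ Finset.range (j+1), (Nat.choose j k : ℝ) * Sr m (k+1) := by
          rw [Finset.sum_range_succ']
          have hzero : ((Nat.choose (j+1) 0 : ℝ) - (Nat.choose j 0 : ℝ)) * Sr m 0 = 0 := by
            simp
          rw [hzero, add_zero]
          refine Finset.sum_congr rfl (fun k _ => ?_)
          have : (Nat.choose (j+1) (k+1) : ℝ) - (Nat.choose j (k+1) : ℝ) = (Nat.choose j k : ℝ) := by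
            rw [Nat.choose_succ_succ]; push_cast; ring
          rw [this]
        rw [← e2, e1]
      rw [split, shift]
      push_cast
      ring

lemma Sr_le (m j : ℕ) : Sr m j ≤ ((j:ℕ):ℝ) ^ m := by
  rw [← Sr_transform m j]
  calc Sr m j = (Nat.choose j j : ℝ) * Sr m j := by simp
    _ ≤ ∑ k ∈ Finset.range (j+1), (Nat.choose j k : ℝ) * Sr m k := by
        apply Finset.single_le_sum (f := fun k => (Nat.choose j k : ℝ) * Sr m k)
        · intro k _
          have := Sr_nonneg m k
          positivity
        · exact Finset.self_mem_range_succ j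

lemma Sr_lower (m u : ℕ) (hu : 1 ≤ u) :
    ((u:ℕ):ℝ)^m - (u:ℝ) * (((u-1:ℕ):ℝ))^m ≤ Sr m u := by
  obtain ⟨u', rfl⟩ : ∃ u', u = u' + 1 := ⟨u - 1, by omega⟩
  have key : ∑ k ∈ Finset.range (u'+1), (Nat.choose (u'+1) k : ℝ) * Sr m k
      ≤ ((u'+1:ℕ):ℝ) * (((u':ℕ):ℝ))^m := by
    calc ∑ k ∈ Finset.range (u'+1), (Nat.choose (u'+1) k : ℝ) * Sr m k
        ≤ ∑ k ∈ Finset.range (u'+1), ((u'+1:ℕ):ℝ) * ((Nat.choose u' k : ℝ) * Sr m k) := by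
          refine Finset.sum_le_sum (fun k hk => ?_)
          have hb : (Nat.choose (u'+1) k : ℝ) ≤ ((u'+1:ℕ):ℝ) * (Nat.choose u' k : ℝ) := by
            have hkn : Nat.choose (u'+1) k ≤ (u'+1) * Nat.choose u' k := by
              have h1 : Nat.choose (u'+1) k * (u' + 1 - k) = (u'+1) * Nat.choose u' k := by
                rw [← Nat.choose_succ_right_eq, Nat.add_one_mul_choose_eq]
              have h2 : 1 ≤ u' + 1 - k := by
                have := Finset.mem_range.mp hk; omega
              calc Nat.choose (u'+1) k = Nat.choose (u'+1) k * 1 := by ring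
                _ ≤ Nat.choose (u'+1) k * (u' + 1 - k) := Nat.mul_le_mul_left _ h2
                _ = (u'+1) * Nat.choose u' k := h1
            exact_mod_cast hkn
          calc (Nat.choose (u'+1) k : ℝ) * Sr m k
              ≤ (((u'+1:ℕ):ℝ) * (Nat.choose u' k : ℝ)) * Sr m k :=
                mul_le_mul_of_nonneg_right hb (Sr_nonneg m k)
            _ = ((u'+1:ℕ):ℝ) * ((Nat.choose u' k : ℝ) * Sr m k) := by ring
        _ = ((u'+1:ℕ):ℝ) * ∑ k ∈ Finset.range (u'+1), (Nat.choose u' k : ℝ) * Sr m k := by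
          rw [Finset.mul_sum]
        _ = ((u'+1:ℕ):ℝ) * (((u':ℕ):ℝ))^m := by rw [Sr_transform]
  have expand := Sr_transform m (u'+1)
  rw [Finset.sum_range_succ, Nat.choose_self] at expand
  have hsub : (u' + 1 - 1 : ℕ) = u' := by omega
  rw [hsub]
  push_cast at expand key ⊢
  nlinarith [expand, key]

lemma K_eq' (m j : ℕ) : K m j = Sr m j / (Nat.factorial j : ℝ) := by
  rw [K, Sr, one_div, inv_mul_eq_div]

lemma K_nonneg (m j : ℕ) : 0 ≤ K m j := by
  rw [K_eq']
  have h := Sr_nonneg m j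
  positivity

lemma K_le (m j : ℕ) : K m j ≤ ((j:ℕ):ℝ)^m := by
  rw [K_eq']
  have h1 : (1:ℝ) ≤ (Nat.factorial j : ℝ) := by
    exact_mod_cast Nat.one_le_iff_ne_zero.mpr (Nat.factorial_pos j).ne'
  calc Sr m j / (Nat.factorial j : ℝ) ≤ Sr m j / 1 :=
        div_le_div_of_nonneg_left (Sr_nonneg m j) one_pos h1
    _ = Sr m j := div_one _
    _ ≤ ((j:ℕ):ℝ)^m := Sr_le m j

lemma K_one (m : ℕ) (hm : 1 ≤ m) : K m 1 = 1 := by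
  rw [K_eq', Sr]
  rw [Finset.sum_range_succ, Finset.sum_range_one]
  norm_num
  omega

lemma B_pos (m : ℕ) (hm : 1 ≤ m) : 0 < B m := by
  rw [B]
  have h1 : (1:ℕ) ∈ Finset.Icc 1 m := by simp [hm]
  have : K m 1 ≤ ∑ j ∈ Finset.Icc 1 m, K m j :=
    Finset.single_le_sum (fun j _ => K_nonneg m j) h1
  rw [K_one m hm] at this
  linarith

lemma sum_K_div_B (m : ℕ) (hm : 1 ≤ m) : ∑ j ∈ Finset.Icc 1 m, K m j / B m = 1 := by
  rw [← Finset.sum_div, ← B, div_self (B_pos m hm).ne']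

/-- harmonic mean of the uniform partition distribution -/
noncomputable def HH (m : ℕ) : ℝ := ∑ j ∈ Finset.Icc 1 m, (K m j / B m) / ((j : ℝ) + 1)

lemma HH_nonneg (m : ℕ) (hm : 1 ≤ m) : 0 ≤ HH m := by
  apply Finset.sum_nonneg
  intro j hj
  have h1 := K_nonneg m j
  have h2 := (B_pos m hm).le
  have h3 : (0:ℝ) ≤ (j:ℝ) + 1 := by positivity
  positivity

lemma abel (w g : ℕ → ℝ) (hg : ∀ j, g (j+1) ≤ g j) : ∀ M : ℕ,
    (∀ m, 1 ≤ m → m ≤ M → 0 ≤ ∑ j ∈ Finset.Icc 1 m, w j) →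
    g M * (∑ j ∈ Finset.Icc 1 M, w j) ≤ ∑ j ∈ Finset.Icc 1 M, w j * g j := by
  intro M
  induction M with
  | zero => intro _; simp
  | succ M ih =>
    intro hW
    have hW' : ∀ m, 1 ≤ m → m ≤ M → 0 ≤ ∑ j ∈ Finset.Icc 1 m, w j :=
      fun m h1 h2 => hW m h1 (by omega)
    have IH := ih hW'
    rw [Finset.sum_Icc_succ_top (by omega : 1 ≤ M + 1),
        Finset.sum_Icc_succ_top (by omega : 1 ≤ M + 1)]
    have hWM : 0 ≤ ∑ j ∈ Finset.Icc 1 M, w j := by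
      cases Nat.eq_zero_or_pos M with
      | inl h => subst h; simp
      | inr h => exact hW M h (by omega)
    nlinarith [hg M, hWM, IH]

lemma F_eq (n s : ℕ) (h1 : 1 ≤ s) (h2 : s < n) : F n s = 1 - HH (n - s) := by
  have hm : 1 ≤ n - s := by omega
  have step : ∀ j ∈ Finset.Icc 1 (n - s),
      (j : ℝ) * f n s j / ((j : ℝ) + 1) = f n s j - f n s j / ((j : ℝ) + 1) := by
    intro j hj
    have hj0 : ((j:ℝ) + 1) ≠ 0 := by positivity
    field_simp
    ring
  rw [F, Finset.sum_congr rfl step, Finset.sum_sub_distrib]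
  have h3 : ∑ j ∈ Finset.Icc 1 (n - s), f n s j = 1 := by
    simp only [f]; exact sum_K_div_B (n - s) hm
  have h4 : ∑ j ∈ Finset.Icc 1 (n - s), f n s j / ((j:ℝ) + 1) = HH (n - s) := by
    simp only [f, HH]
  rw [h3, h4]

lemma v_formula (a c : ℝ) (n s : ℕ) (h1 : 1 ≤ s) (h2 : s < n) :
    v a c n s = (a - c) ^ 2 * (HH (n-s)) ^ 2 / (1 + HH (n-s)) ^ 2 := by
  have hsn : s ≠ n := by omega
  have hs0 : s ≠ 0 := by omega
  rw [v, if_neg hsn, if_neg hs0, F_eq n s h1 h2]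
  have h4 : ∑ j ∈ Finset.Icc 1 (n - s), f n s j / ((j:ℝ) + 1) = HH (n - s) := by
    simp only [f, HH]
  rw [h4]
  ring_nf

lemma exp_lin : ∀ j : ℕ, 11 ≤ j → 144*j + 144 ≤ 2^j := by
  intro j hj
  induction j with
  | zero => omega
  | succ j ih =>
    rcases Nat.lt_or_ge j 11 with h | h
    · interval_cases j <;> simp_all
    · have := ih h
      have : 2^(j+1) = 2 * 2^j := by ring
      omega

lemma two_choose (m : ℕ) (h : 2 ≤ m) : 2 * m.choose 2 = m * (m-1) := by
  rw [Nat.choose_two_right]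
  have : 2 ∣ m * (m-1) := by
    rcases Nat.even_or_odd m with he | ho
    · exact Dvd.dvd.mul_right he.two_dvd _
    · exact Dvd.dvd.mul_left (Nat.Odd.sub_odd ho odd_one).two_dvd _
  omega

lemma pow_dom (x m : ℕ) (hm : 2 ≤ m) (h : 4*(x+1)*x*x ≤ m*(m-1)) :
    2*(x+1)*x^m ≤ (x+1)^m := by
  have hterm : x^(m-2) * 1^(m-(m-2)) * m.choose (m-2) ≤ (x+1)^m := by
    rw [add_pow x 1 m]
    exact Finset.single_le_sum (f := fun k => x^k * 1^(m-k) * m.choose k)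
      (fun i _ => Nat.zero_le _) (Finset.mem_range.mpr (show m-2 < m+1 by omega))
  have hc : m.choose (m-2) = m.choose 2 := Nat.choose_symm (by omega)
  rw [hc, one_pow, mul_one] at hterm
  have hx : x^m = x^(m-2) * (x*x) := by
    have h2 : (m-2)+2 = m := by omega
    calc x^m = x^((m-2)+2) := by rw [h2]
      _ = x^(m-2) * x^2 := pow_add x _ 2
      _ = x^(m-2) * (x*x) := by ring
  -- goal: 2*(x+1)*x^m ≤ (x+1)^m
  have key : 2*(2*(x+1)*x^m) ≤ 2*((x+1)^m) := by
    calc 2*(2*(x+1)*x^m) = (4*(x+1)*x*x) * x^(m-2) := by rw [hx]; ring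
      _ ≤ (m*(m-1)) * x^(m-2) := Nat.mul_le_mul_right _ h
      _ = (2 * m.choose 2) * x^(m-2) := by rw [two_choose m hm]
      _ = 2 * (x^(m-2) * m.choose 2) := by ring
      _ ≤ 2*((x+1)^m) := Nat.mul_le_mul_left _ hterm
  omega

lemma KEY (m : ℕ) (hm : 1073741824 ≤ m) : (HH m)^2 ≤ 1/(8*m) := by
  have hm1 : 1 ≤ m := by omega
  set k := Nat.sqrt m with hkdef
  have hk15 : 32768 ≤ k := by
    have h1 : Nat.sqrt 1073741824 ≤ k := Nat.sqrt_le_sqrt hm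
    have h2 : Nat.sqrt 1073741824 = 32768 := by
      rw [show (1073741824:ℕ) = 32768*32768 from by norm_num, Nat.sqrt_eq]
    omega
  have hkk : k * k ≤ m := by
    have := Nat.sqrt_le' m
    nlinarith [this]
  have hmk : m < (k+1) * (k+1) := by
    have := Nat.lt_succ_sqrt' m
    nlinarith [this]
  set t := 4*(k+1) with htdef
  set u := 8*(k+1) with hudef
  have hu1 : 1 ≤ u := by omega
  have hum : u ≤ m := by
    have c1 : 16*k ≤ k*k := Nat.mul_le_mul_right k (by omega)
    omega
  have htm : t ≤ m := by omega
  -- Gamma : 2*u*(u-1)^m ≤ u^m  (ℕ)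
  have hGamma : 2*u*(u-1)^m ≤ u^m := by
    have hx : u - 1 + 1 = u := by omega
    have h4 : 4*((u-1)+1)*(u-1)*(u-1) ≤ m*(m-1) := by
      have e1 : u - 1 = 8*k+7 := by omega
      rw [e1]
      have c2 : 2917*k ≤ m := le_trans (Nat.mul_le_mul_right k (by omega)) hkk
      have c3 : 2916*k ≤ m - 1 := by omega
      calc 4*(8*k+7+1)*(8*k+7)*(8*k+7) ≤ 4*(9*k)*(9*k)*(9*k) := by
            have l1 : 8*k+7+1 ≤ 9*k := by omega
            have l2 : 8*k+7 ≤ 9*k := by omega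
            exact Nat.mul_le_mul (Nat.mul_le_mul (Nat.mul_le_mul_left 4 l1) l2) l2
        _ = (k*k)*(2916*k) := by ring
        _ ≤ m*(m-1) := Nat.mul_le_mul hkk c3
    have := pow_dom (u-1) m (by omega) h4
    rw [hx] at this
    exact this
  -- E : u^(u+3) ≤ 2^m (ℕ)
  have hE : u^(u+3) ≤ 2^m := by
    set jq := k / 18 with hjqdef
    have hjq : 18 * jq ≤ k := by omega
    have hjq11 : 11 ≤ jq := by omega
    have h1 : u ≤ 2^jq := by
      have hl := exp_lin jq hjq11
      have : u ≤ 144*jq + 144 := by omega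
      omega
    have h2 : jq*(u+3) ≤ k*k := by
      calc jq*(u+3) = jq*(8*k+11) := by rw [hudef]; ring_nf
        _ ≤ jq*(18*k) := Nat.mul_le_mul_left jq (by omega)
        _ = (18*jq)*k := by ring
        _ ≤ k*k := Nat.mul_le_mul_right k hjq
    calc u^(u+3) ≤ (2^jq)^(u+3) := Nat.pow_le_pow_left h1 _
      _ = 2^(jq*(u+3)) := by rw [← pow_mul]
      _ ≤ 2^(k*k) := Nat.pow_le_pow_right (by norm_num) h2
      _ ≤ 2^m := Nat.pow_le_pow_right (by norm_num) hkk
  -- Bell lower bound (ℝ)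
  have hBpos := B_pos m hm1
  have hfac1 : (1:ℝ) ≤ (Nat.factorial u : ℝ) := by
    exact_mod_cast Nat.one_le_iff_ne_zero.mpr (Nat.factorial_pos u).ne'
  have hfacpos : (0:ℝ) < (Nat.factorial u : ℝ) := by linarith
  have hBl : ((u:ℝ))^m / (2 * (Nat.factorial u : ℝ)) ≤ B m := by
    have h1 : ((u:ℝ))^m - (u:ℝ)*(((u-1:ℕ):ℝ))^m ≤ Sr m u := Sr_lower m u hu1
    have h2 : (2:ℝ)*(u:ℝ)*(((u-1:ℕ):ℝ))^m ≤ ((u:ℝ))^m := by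
      have := hGamma
      exact_mod_cast this
    have h3 : ((u:ℝ))^m/2 ≤ Sr m u := by linarith
    have h4 : K m u ≤ B m := by
      rw [B]
      exact Finset.single_le_sum (fun j _ => K_nonneg m j)
        (Finset.mem_Icc.mpr ⟨hu1, hum⟩)
    calc ((u:ℝ))^m / (2 * (Nat.factorial u : ℝ)) = (((u:ℝ))^m/2)/(Nat.factorial u : ℝ) := by
          ring
      _ ≤ Sr m u / (Nat.factorial u : ℝ) := by gcongr
      _ = K m u := (K_eq' m u).symm
      _ ≤ B m := h4
  -- split HH
  have hIcc1 : Finset.Icc 1 m = Finset.Ioc 0 m := by rw [← Finset.Icc_add_one_left_eq_Ioc]; rfl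
  have hIcc2 : Finset.Icc 1 t = Finset.Ioc 0 t := by rw [← Finset.Icc_add_one_left_eq_Ioc]; rfl
  have hsplit : HH m = (∑ j ∈ Finset.Ioc 0 t, (K m j / B m) / ((j : ℝ) + 1))
      + ∑ j ∈ Finset.Ioc t m, (K m j / B m) / ((j : ℝ) + 1) := by
    rw [HH, hIcc1, ← Finset.sum_Ioc_consecutive _ (Nat.zero_le t) htm]
  -- head bound
  have hA : (∑ j ∈ Finset.Ioc 0 t, (K m j / B m) / ((j : ℝ) + 1))
      ≤ t * ((t:ℝ)^m / B m) := by
    have hb : ∀ j ∈ Finset.Ioc 0 t, (K m j / B m) / ((j : ℝ) + 1) ≤ (t:ℝ)^m / B m := by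
      intro j hj
      obtain ⟨hj1, hj2⟩ := Finset.mem_Ioc.mp hj
      have hKB : 0 ≤ K m j / B m := div_nonneg (K_nonneg m j) hBpos.le
      have step1 : (K m j / B m) / ((j : ℝ) + 1) ≤ K m j / B m := by
        apply div_le_self hKB
        have : (0:ℝ) ≤ (j:ℝ) := Nat.cast_nonneg j
        linarith
      have step2 : K m j ≤ (t:ℝ)^m := by
        calc K m j ≤ ((j:ℕ):ℝ)^m := K_le m j
          _ ≤ (t:ℝ)^m := by
            apply pow_le_pow_left₀ (Nat.cast_nonneg j)
            exact_mod_cast hj2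
      have step3 : K m j / B m ≤ (t:ℝ)^m / B m := by gcongr
      linarith
    calc (∑ j ∈ Finset.Ioc 0 t, (K m j / B m) / ((j : ℝ) + 1))
        ≤ ∑ j ∈ Finset.Ioc 0 t, (t:ℝ)^m / B m := Finset.sum_le_sum hb
      _ = ((Finset.Ioc 0 t).card : ℝ) * ((t:ℝ)^m / B m) := by
          rw [Finset.sum_const, nsmul_eq_mul]
      _ = t * ((t:ℝ)^m / B m) := by rw [Nat.card_Ioc]; norm_num
  -- tail bound
  have hC : (∑ j ∈ Finset.Ioc t m, (K m j / B m) / ((j : ℝ) + 1)) ≤ 1 / ((t:ℝ) + 2) := by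
    have ht2 : (0:ℝ) < (t:ℝ) + 2 := by positivity
    have hb : ∀ j ∈ Finset.Ioc t m, (K m j / B m) / ((j : ℝ) + 1)
        ≤ (K m j / B m) / ((t:ℝ) + 2) := by
      intro j hj
      obtain ⟨hj1, hj2⟩ := Finset.mem_Ioc.mp hj
      apply div_le_div_of_nonneg_left (div_nonneg (K_nonneg m j) hBpos.le) ht2
      have : (t:ℝ) + 1 ≤ (j:ℝ) := by exact_mod_cast hj1
      linarith
    have hsub : (∑ j ∈ Finset.Ioc t m, K m j) ≤ B m := by
      rw [B, hIcc1]
      apply Finset.sum_le_sum_of_subset_of_nonneg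
      · apply Finset.Ioc_subset_Ioc_left (Nat.zero_le t)
      · intro j _ _; exact K_nonneg m j
    calc (∑ j ∈ Finset.Ioc t m, (K m j / B m) / ((j : ℝ) + 1))
        ≤ ∑ j ∈ Finset.Ioc t m, (K m j / B m) / ((t:ℝ) + 2) := Finset.sum_le_sum hb
      _ = (∑ j ∈ Finset.Ioc t m, K m j) / B m / ((t:ℝ) + 2) := by
          rw [← Finset.sum_div, ← Finset.sum_div]
      _ ≤ B m / B m / ((t:ℝ) + 2) := by gcongr
      _ = 1 / ((t:ℝ) + 2) := by rw [div_self hBpos.ne']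
  -- numeric assembly
  have hNat : (2*t*(Nat.factorial u)) * ((3*(k+1))*(t+2)) ≤ 2^m := by
    calc (2*t*(Nat.factorial u)) * ((3*(k+1))*(t+2))
        ≤ (u*(Nat.factorial u)) * (u*u) := by
          apply Nat.mul_le_mul
          · apply Nat.mul_le_mul_right; omega
          · apply Nat.mul_le_mul <;> omega
      _ ≤ (u*u^u) * (u*u) := by
          apply Nat.mul_le_mul_right
          exact Nat.mul_le_mul_left u (Nat.factorial_le_pow u)
      _ = u^(u+3) := by ring
      _ ≤ 2^m := hE
  -- head term ≤ 2*t*u!/2^m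
  have htpos : (0:ℝ) < (t:ℝ) := by
    have : 0 < t := by omega
    exact_mod_cast this
  have hApow : t * ((t:ℝ)^m / B m) ≤ (2*t*(Nat.factorial u) : ℕ) / (2:ℝ)^m := by
    have hlow : (0:ℝ) < ((u:ℝ))^m / (2 * (Nat.factorial u : ℝ)) := by positivity
    have step1 : t * ((t:ℝ)^m / B m)
        ≤ t * ((t:ℝ)^m / (((u:ℝ))^m / (2 * (Nat.factorial u : ℝ)))) := by
      gcongr
    have hueq : (u:ℝ) = 2*(t:ℝ) := by
      push_cast [hudef, htdef]
      ring
    have step2 : (t:ℝ) * ((t:ℝ)^m / (((u:ℝ))^m / (2 * (Nat.factorial u : ℝ))))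
        = (2*t*(Nat.factorial u) : ℕ) / (2:ℝ)^m := by
      rw [hueq, mul_pow]
      push_cast
      field_simp
      try ring
    rw [← step2]
    exact step1
  -- final inequality
  have hfinal : ((2*t*(Nat.factorial u) : ℕ) : ℝ) / (2:ℝ)^m + 1/((t:ℝ)+2)
      ≤ 1/(3*((k:ℝ)+1)) := by
    have h2m : (0:ℝ) < (2:ℝ)^m := by positivity
    have hNat' : ((2*t*(Nat.factorial u) : ℕ) : ℝ) * ((3*((k:ℝ)+1))*((t:ℝ)+2)) ≤ (2:ℝ)^m := by
      have := hNat
      have hcast : (((2*t*(Nat.factorial u)) * ((3*(k+1))*(t+2)) : ℕ) : ℝ) ≤ ((2^m : ℕ) : ℝ) := by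
        exact_mod_cast this
      push_cast at hcast
      push_cast
      linarith
    have hk1 : (0:ℝ) < 3*((k:ℝ)+1) := by positivity
    have ht2 : (0:ℝ) < (t:ℝ)+2 := by positivity
    have hfn : (0:ℝ) ≤ ((2*t*(Nat.factorial u) : ℕ) : ℝ) := Nat.cast_nonneg _
    -- first: head ≤ 1/((3(k+1))(t+2))
    have hhead : ((2*t*(Nat.factorial u) : ℕ) : ℝ) / (2:ℝ)^m ≤ 1/((3*((k:ℝ)+1))*((t:ℝ)+2)) := by
      rw [div_le_div_iff₀ h2m (by positivity)]
      linarith [hNat']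
    -- second: 1/((3(k+1))(t+2)) + 1/(t+2) ≤ 1/(3(k+1))
    have htk : (t:ℝ) = 4*((k:ℝ)+1) := by push_cast [htdef]; ring
    have htail : 1/((3*((k:ℝ)+1))*((t:ℝ)+2)) + 1/((t:ℝ)+2) ≤ 1/(3*((k:ℝ)+1)) := by
      rw [htk]
      rw [div_add_div _ _ (by positivity) (by positivity), div_le_div_iff₀ (by positivity) (by positivity)]
      have hk0 : (0:ℝ) ≤ (k:ℝ) := Nat.cast_nonneg k
      nlinarith [hk0, mul_nonneg (mul_nonneg
        (by linarith : (0:ℝ) ≤ 3*((k:ℝ)+1)) (by linarith : (0:ℝ) ≤ 4*((k:ℝ)+1)+2))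
        (by linarith : (0:ℝ) ≤ (k:ℝ)+2)]
    linarith
  -- conclude
  have hHH : HH m ≤ 1/(3*((k:ℝ)+1)) := by
    rw [hsplit]
    calc (∑ j ∈ Finset.Ioc 0 t, (K m j / B m) / ((j : ℝ) + 1))
        + ∑ j ∈ Finset.Ioc t m, (K m j / B m) / ((j : ℝ) + 1)
        ≤ t * ((t:ℝ)^m / B m) + 1/((t:ℝ)+2) := by
          exact add_le_add hA hC
      _ ≤ ((2*t*(Nat.factorial u) : ℕ) : ℝ) / (2:ℝ)^m + 1/((t:ℝ)+2) := by
          exact add_le_add_left hApow _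
      _ ≤ 1/(3*((k:ℝ)+1)) := hfinal
  have hHH0 := HH_nonneg m hm1
  have hsq : (HH m)^2 ≤ (1/(3*((k:ℝ)+1)))^2 := by
    apply pow_le_pow_left₀ hHH0 hHH
  have hlast : (1/(3*((k:ℝ)+1)))^2 ≤ 1/(8*(m:ℝ)) := by
    have hmpos : (0:ℝ) < (m:ℝ) := by exact_mod_cast hm1
    have hmk' : (m:ℝ) < ((k:ℝ)+1)*((k:ℝ)+1) := by exact_mod_cast hmk
    rw [div_pow, one_pow, div_le_div_iff₀ (by positivity) (by positivity)]
    have e : (3*((k:ℝ)+1))^2 = 9*(((k:ℝ)+1)*((k:ℝ)+1)) := by ring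
    rw [one_mul, e]
    linarith [hmk']
  calc (HH m)^2 ≤ (1/(3*((k:ℝ)+1)))^2 := hsq
    _ ≤ 1/(8*(m:ℝ)) := hlast

lemma sum_f_one (n s : ℕ) (h1 : 1 ≤ s) (h2 : s < n) :
    ∑ j ∈ Finset.Icc 1 (n-s), f n s j = 1 := by
  simp only [f]
  exact sum_K_div_B (n-s) (by omega)

lemma g_mono (h₁ h₂ : ℝ) (h0 : 0 ≤ h₁) (h12 : h₁ ≤ h₂) :
    h₁^2/(1+h₁)^2 ≤ h₂^2/(1+h₂)^2 := by
  have h02 : 0 ≤ h₂ := le_trans h0 h12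
  have p1 : (0:ℝ) < (1+h₁)^2 := by positivity
  have p2 : (0:ℝ) < (1+h₂)^2 := by positivity
  rw [div_le_div_iff₀ p1 p2]
  nlinarith [mul_nonneg (sub_nonneg.mpr h12)
    (by nlinarith [mul_nonneg h0 h02] : (0:ℝ) ≤ h₂ + h₁ + 2*(h₁*h₂))]

/-- if for each `n > s ≥ 1` the distribution `z n s` on `{1,…,n-s}`
first-order dominates the uniform partition distribution `f n s`, and `v_z` is the
game built from `z` via the harmonic representation, then (i) every core allocation
of `(Fin n, v^n)` is a core allocation of `(Fin n, v_z^n)`, and (ii) the core of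
`(Fin n, v_z^n)` is nonempty for all sufficiently large `n`. -/
theorem stmt11 (a c : ℝ) (hc : 0 < c) (hca : c < a)
    (z : ℕ → ℕ → ℕ → ℝ)
    (hz0 : ∀ n s : ℕ, 1 ≤ s → s < n → ∀ j ∈ Finset.Icc 1 (n - s), 0 ≤ z n s j)
    (hz1 : ∀ n s : ℕ, 1 ≤ s → s < n → ∑ j ∈ Finset.Icc 1 (n - s), z n s j = 1)
    (hdom : ∀ n s : ℕ, 1 ≤ s → s < n → ∀ m ∈ Finset.Icc 1 (n - s),
      ∑ j ∈ Finset.Icc 1 m, z n s j ≤ ∑ j ∈ Finset.Icc 1 m, f n s j)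
    (vz : ℕ → ℕ → ℝ)
    (hvz : ∀ n s : ℕ, 1 ≤ s → s < n → vz n s =
      (a - c) ^ 2 * (∑ j ∈ Finset.Icc 1 (n - s), z n s j / (1 + (j : ℝ))) ^ 2 /
        (1 + ∑ j ∈ Finset.Icc 1 (n - s), z n s j / (1 + (j : ℝ))) ^ 2)
    (hvzn : ∀ n : ℕ, vz n n = (a - c) ^ 2 / 4) :
    (∀ n : ℕ, ∀ x : Fin n → ℝ,
      ((∑ i, x i = v a c n n) ∧
        ∀ S : Finset (Fin n), S.Nonempty → v a c n S.card ≤ ∑ i ∈ S, x i) →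
      ((∑ i, x i = vz n n) ∧
        ∀ S : Finset (Fin n), S.Nonempty → vz n S.card ≤ ∑ i ∈ S, x i)) ∧
    (∃ N₀ : ℕ, ∀ n : ℕ, N₀ ≤ n → ∃ x : Fin n → ℝ,
      (∑ i, x i = vz n n) ∧
        ∀ S : Finset (Fin n), S.Nonempty → vz n S.card ≤ ∑ i ∈ S, x i) := by
  have hac2 : (0:ℝ) ≤ (a-c)^2 := sq_nonneg _
  -- main estimates
  have main : ∀ n s : ℕ, 1 ≤ s → s < n →
      vz n s ≤ v a c n s ∧ vz n s ≤ (a-c)^2/9 ∧ vz n s ≤ (a-c)^2 * (HH (n-s))^2 := by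
    intro n s h1 h2
    have hm : 1 ≤ n - s := by omega
    set hz := ∑ j ∈ Finset.Icc 1 (n-s), z n s j / (1+(j:ℝ)) with hhz
    have hz0' : 0 ≤ hz := Finset.sum_nonneg fun j hj =>
      div_nonneg (hz0 n s h1 h2 j hj) (by positivity)
    have hzhalf : hz ≤ 1/2 := by
      have step : ∀ j ∈ Finset.Icc 1 (n-s), z n s j / (1+(j:ℝ)) ≤ z n s j / 2 := by
        intro j hj
        obtain ⟨hj1, hj2⟩ := Finset.mem_Icc.mp hj
        apply div_le_div_of_nonneg_left (hz0 n s h1 h2 j hj) (by norm_num)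
        have : (1:ℝ) ≤ (j:ℝ) := by exact_mod_cast hj1
        linarith
      calc hz ≤ ∑ j ∈ Finset.Icc 1 (n-s), z n s j / 2 := Finset.sum_le_sum step
        _ = (∑ j ∈ Finset.Icc 1 (n-s), z n s j) / 2 := by rw [Finset.sum_div]
        _ = 1/2 := by rw [hz1 n s h1 h2]
    have hzH : hz ≤ HH (n-s) := by
      have hg : ∀ j : ℕ, (fun j : ℕ => 1/(1+(j:ℝ))) (j+1) ≤ (fun j : ℕ => 1/(1+(j:ℝ))) j := by
        intro j
        simp only []
        apply div_le_div_of_nonneg_left (by norm_num) (by positivity)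
        push_cast
        linarith
      have hW : ∀ m, 1 ≤ m → m ≤ n - s →
          0 ≤ ∑ j ∈ Finset.Icc 1 m, (f n s j - z n s j) := by
        intro m hm1 hm2
        rw [Finset.sum_sub_distrib, sub_nonneg]
        exact hdom n s h1 h2 m (Finset.mem_Icc.mpr ⟨hm1, hm2⟩)
      have habel := abel (fun j => f n s j - z n s j) (fun j : ℕ => 1/(1+(j:ℝ))) hg (n-s) hW
      have hzero : ∑ j ∈ Finset.Icc 1 (n-s), (f n s j - z n s j) = 0 := by
        rw [Finset.sum_sub_distrib, sum_f_one n s h1 h2, hz1 n s h1 h2, sub_self]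
      rw [hzero, mul_zero] at habel
      have expand : ∑ j ∈ Finset.Icc 1 (n-s), (f n s j - z n s j) * ((fun j : ℕ => 1/(1+(j:ℝ))) j)
          = (∑ j ∈ Finset.Icc 1 (n-s), f n s j/(1+(j:ℝ)))
            - ∑ j ∈ Finset.Icc 1 (n-s), z n s j/(1+(j:ℝ)) := by
        rw [← Finset.sum_sub_distrib]
        refine Finset.sum_congr rfl (fun j _ => ?_)
        simp only []
        ring
      rw [expand] at habel
      have hHHeq : ∑ j ∈ Finset.Icc 1 (n-s), f n s j/(1+(j:ℝ)) = HH (n-s) := by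
        rw [HH]
        refine Finset.sum_congr rfl (fun j _ => ?_)
        rw [f, add_comm]
      rw [hHHeq] at habel
      linarith
    have hvzeq := hvz n s h1 h2
    rw [← hhz] at hvzeq
    refine ⟨?_, ?_, ?_⟩
    · rw [hvzeq, v_formula a c n s h1 h2]
      have hg := g_mono hz (HH (n-s)) hz0' hzH
      calc (a-c)^2 * hz^2/(1+hz)^2 = (a-c)^2 * (hz^2/(1+hz)^2) := by ring
        _ ≤ (a-c)^2 * ((HH (n-s))^2/(1+HH (n-s))^2) := mul_le_mul_of_nonneg_left hg hac2
        _ = (a-c)^2 * (HH (n-s))^2/(1+HH (n-s))^2 := by ring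
    · rw [hvzeq]
      have hg : hz^2/(1+hz)^2 ≤ 1/9 := by
        calc hz^2/(1+hz)^2 ≤ (1/2)^2/(1+(1/2:ℝ))^2 := g_mono hz (1/2) hz0' hzhalf
          _ = 1/9 := by norm_num
      calc (a-c)^2 * hz^2/(1+hz)^2 = (a-c)^2 * (hz^2/(1+hz)^2) := by ring
        _ ≤ (a-c)^2 * (1/9) := mul_le_mul_of_nonneg_left hg hac2
        _ = (a-c)^2/9 := by ring
    · rw [hvzeq]
      have hH0 := HH_nonneg (n-s) hm
      have hg1 : hz^2/(1+hz)^2 ≤ (HH (n-s))^2/(1+HH (n-s))^2 := g_mono hz (HH (n-s)) hz0' hzH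
      have hg2 : (HH (n-s))^2/(1+HH (n-s))^2 ≤ (HH (n-s))^2 := by
        apply div_le_self (sq_nonneg _)
        nlinarith
      calc (a-c)^2 * hz^2/(1+hz)^2 = (a-c)^2 * (hz^2/(1+hz)^2) := by ring
        _ ≤ (a-c)^2 * (HH (n-s))^2 := mul_le_mul_of_nonneg_left (le_trans hg1 hg2) hac2
  have hvnn : ∀ n : ℕ, v a c n n = (a-c)^2/4 := fun n => by rw [v, if_pos rfl]
  constructor
  · -- part (i)
    rintro n x ⟨hsum, hcoal⟩
    constructor
    · rw [hsum, hvnn n, hvzn n]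
    · intro S hS
      have hc1 : 1 ≤ S.card := hS.card_pos
      have hcn : S.card ≤ n := by
        have := Finset.card_le_univ S
        simpa using this
      rcases eq_or_lt_of_le hcn with he | hl
      · have hU : S = Finset.univ := (Finset.card_eq_iff_eq_univ S).mp (by rw [he, Fintype.card_fin])
        rw [he, hvzn n, hU]
        have hx : ∑ i ∈ (Finset.univ : Finset (Fin n)), x i = v a c n n := hsum
        rw [hx, hvnn n]
      · exact le_trans (main n S.card hc1 hl).1 (hcoal S hS)
  · -- part (ii)
    refine ⟨2000000000, fun n hn => ?_⟩
    have hn1 : 1 ≤ n := by omega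
    have hnR : (0:ℝ) < (n:ℝ) := by exact_mod_cast hn1
    refine ⟨fun _ => (a-c)^2/(4*(n:ℝ)), ?_, ?_⟩
    · rw [hvzn n]
      rw [Finset.sum_const, Finset.card_univ, Fintype.card_fin, nsmul_eq_mul]
      field_simp
    · intro S hS
      have hc1 : 1 ≤ S.card := hS.card_pos
      have hcn : S.card ≤ n := by
        have := Finset.card_le_univ S
        simpa using this
      have hsc : ∑ _i ∈ S, (a-c)^2/(4*(n:ℝ)) = (S.card : ℝ) * ((a-c)^2/(4*(n:ℝ))) := by
        rw [Finset.sum_const, nsmul_eq_mul]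
      rw [hsc]
      set s := S.card with hsdef
      rcases eq_or_lt_of_le hcn with he | hl
      · rw [he, hvzn n]
        have hx : (n:ℝ) * ((a-c)^2/(4*(n:ℝ))) = (a-c)^2/4 := by
          field_simp
        rw [hx]
      · have hsR : (1:ℝ) ≤ (s:ℝ) := by exact_mod_cast hc1
        rcases le_or_gt (4*n) (9*s) with hbig | hsmall
        · have hb := (main n s hc1 hl).2.1
          have hcast : 4*(n:ℝ) ≤ 9*(s:ℝ) := by exact_mod_cast hbig
          calc vz n s ≤ (a-c)^2/9 := hb
            _ ≤ (s:ℝ) * ((a-c)^2/(4*(n:ℝ))) := by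
              have e : (s:ℝ) * ((a-c)^2/(4*(n:ℝ))) = ((s:ℝ)*(a-c)^2)/(4*(n:ℝ)) := by ring
              rw [e, div_le_div_iff₀ (by norm_num : (0:ℝ) < 9) (by positivity)]
              nlinarith [mul_nonneg (by linarith : (0:ℝ) ≤ 9*(s:ℝ) - 4*(n:ℝ)) hac2]
        · -- small coalition
          have hm1 : 1 ≤ n - s := by omega
          have hmbig : 1073741824 ≤ n - s := by omega
          have h4n8m : 4*n ≤ 8*(n-s) := by omega
          have hKEY := KEY (n-s) hmbig
          have hb := (main n s hc1 hl).2.2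
          have hmR : (0:ℝ) < ((n-s:ℕ):ℝ) := by exact_mod_cast hm1
          have hcast : 4*(n:ℝ) ≤ 8*((n-s:ℕ):ℝ) := by exact_mod_cast h4n8m
          calc vz n s ≤ (a-c)^2 * (HH (n-s))^2 := hb
            _ ≤ (a-c)^2 * (1/(8*((n-s:ℕ):ℝ))) := mul_le_mul_of_nonneg_left hKEY hac2
            _ ≤ (s:ℝ) * ((a-c)^2/(4*(n:ℝ))) := by
              have e : (s:ℝ) * ((a-c)^2/(4*(n:ℝ))) = ((s:ℝ)*(a-c)^2)/(4*(n:ℝ)) := by ring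
              have e2 : (a-c)^2 * (1/(8*((n-s:ℕ):ℝ))) = (a-c)^2/(8*((n-s:ℕ):ℝ)) := by ring
              rw [e, e2, div_le_div_iff₀ (by positivity) (by positivity)]
              nlinarith [mul_nonneg (mul_nonneg hac2 (by linarith : (0:ℝ) ≤ (s:ℝ) - 1))
                  (by linarith : (0:ℝ) ≤ 8*((n-s:ℕ):ℝ)),
                mul_nonneg hac2 (by linarith : (0:ℝ) ≤ 8*((n-s:ℕ):ℝ) - 4*(n:ℝ))]
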